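/- Let S be the 4×4 matrix with rows (1,0,0,-1), (0,1,1,0), (0,1,-1,0), (1,0,0,1) and define F(A) = S⁻¹·A·S. A 4×4 real matrix A is a strictly stochastic strand symmetric (SSM) matrix if and only if F(A) has rows (λ, 1-λ, 0, 0), (1-μ, μ, 0, 0), (0, 0, α, α'), (0, 0, β', β) with 0 < λ < 1, 0 < μ < 1, |β| < λ, |β'| < 1-λ, |α| < μ, and |α'| < 1-μ. -/

import Mathlib

/-- The matrix `S` of the generalized Fourier transform for SSM matrices. -/
def Smat : Matrix (Fin 4) (Fin 4) ℝ :=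
  !![1, 0, 0, -1; 0, 1, 1, 0; 0, 1, -1, 0; 1, 0, 0, 1]

/-- The conjugation `F(A) = S⁻¹ A S`. -/
noncomputable def F (A : Matrix (Fin 4) (Fin 4) ℝ) : Matrix (Fin 4) (Fin 4) ℝ :=
  Smat⁻¹ * A * Smat

/-- A strand symmetric (SSM) matrix: rows `(a,b,c,d), (e,f,g,h), (h,g,f,e), (d,c,b,a)`
with row sums equal to `1`. -/
def IsSSM (A : Matrix (Fin 4) (Fin 4) ℝ) : Prop :=
  (∀ i, ∑ j, A i j = 1) ∧
    A 2 0 = A 1 3 ∧ A 2 1 = A 1 2 ∧ A 2 2 = A 1 1 ∧ A 2 3 = A 1 0 ∧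
    A 3 0 = A 0 3 ∧ A 3 1 = A 0 2 ∧ A 3 2 = A 0 1 ∧ A 3 3 = A 0 0

/-- A strictly stochastic matrix: all entries strictly positive and row sums equal to `1`. -/
def StrictlyStochastic (A : Matrix (Fin 4) (Fin 4) ℝ) : Prop :=
  (∀ i j, 0 < A i j) ∧ ∀ i, ∑ j, A i j = 1

noncomputable def SmatInv : Matrix (Fin 4) (Fin 4) ℝ :=
  !![1/2, 0, 0, 1/2; 0, 1/2, 1/2, 0; 0, 1/2, -1/2, 0; -1/2, 0, 0, 1/2]

lemma hSB : Smat * SmatInv = 1 := by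
  ext i j
  fin_cases i <;> fin_cases j <;>
    simp [Smat, SmatInv, Matrix.mul_apply, Fin.sum_univ_four] <;> norm_num

lemma hinv : Smat⁻¹ = SmatInv := Matrix.inv_eq_right_inv hSB

lemma recon (lam mu al al' be be' : ℝ) :
    Smat * !![lam, 1 - lam, 0, 0; 1 - mu, mu, 0, 0; 0, 0, al, al'; 0, 0, be', be] * SmatInv =
    !![(lam+be)/2, (1-lam-be')/2, (1-lam+be')/2, (lam-be)/2;
       (1-mu-al')/2, (mu+al)/2, (mu-al)/2, (1-mu+al')/2;
       (1-mu+al')/2, (mu-al)/2, (mu+al)/2, (1-mu-al')/2;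
       (lam-be)/2, (1-lam+be')/2, (1-lam-be')/2, (lam+be)/2] := by
  ext i j
  fin_cases i <;> fin_cases j <;>
    simp [Smat, SmatInv, Matrix.mul_apply, Matrix.vecMul, dotProduct,
      Fin.sum_univ_four] <;> ring

set_option maxHeartbeats 2000000 in
lemma Fgen (A : Matrix (Fin 4) (Fin 4) ℝ) :
    SmatInv * A * Smat = !![
     (A 0 0 + A 0 3 + A 3 0 + A 3 3)/2, (A 0 1 + A 0 2 + A 3 1 + A 3 2)/2,
       (A 0 1 - A 0 2 + A 3 1 - A 3 2)/2, (A 0 3 - A 0 0 + A 3 3 - A 3 0)/2;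
     (A 1 0 + A 1 3 + A 2 0 + A 2 3)/2, (A 1 1 + A 1 2 + A 2 1 + A 2 2)/2,
       (A 1 1 - A 1 2 + A 2 1 - A 2 2)/2, (A 1 3 - A 1 0 + A 2 3 - A 2 0)/2;
     (A 1 0 + A 1 3 - A 2 0 - A 2 3)/2, (A 1 1 + A 1 2 - A 2 1 - A 2 2)/2,
       (A 1 1 - A 1 2 - A 2 1 + A 2 2)/2, (A 1 3 - A 1 0 - A 2 3 + A 2 0)/2;
     (A 3 0 + A 3 3 - A 0 0 - A 0 3)/2, (A 3 1 + A 3 2 - A 0 1 - A 0 2)/2,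
       (A 3 1 - A 3 2 - A 0 1 + A 0 2)/2, (A 3 3 - A 3 0 - A 0 3 + A 0 0)/2] := by
  ext i j
  fin_cases i <;> fin_cases j <;>
    simp [Smat, SmatInv, Matrix.mul_apply, Matrix.vecMul, dotProduct,
      Fin.sum_univ_four] <;> ring

theorem stmt_12 (A : Matrix (Fin 4) (Fin 4) ℝ) :
    (StrictlyStochastic A ∧ IsSSM A) ↔
      ∃ lam mu al al' be be' : ℝ,
        F A = !![lam, 1 - lam, 0, 0; 1 - mu, mu, 0, 0; 0, 0, al, al'; 0, 0, be', be] ∧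
        0 < lam ∧ lam < 1 ∧ 0 < mu ∧ mu < 1 ∧
        |be| < lam ∧ |be'| < 1 - lam ∧ |al| < mu ∧ |al'| < 1 - mu := by
  constructor
  · rintro ⟨⟨hp, hs⟩, _, e20, e21, e22, e23, e30, e31, e32, e33⟩
    have h0 : A 0 0 + A 0 1 + A 0 2 + A 0 3 = 1 := by
      have := hs 0; rw [Fin.sum_univ_four] at this; linarith
    have h1 : A 1 0 + A 1 1 + A 1 2 + A 1 3 = 1 := by
      have := hs 1; rw [Fin.sum_univ_four] at this; linarith
    refine ⟨A 0 0 + A 0 3, A 1 1 + A 1 2, A 1 1 - A 1 2, A 1 3 - A 1 0,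
        A 0 0 - A 0 3, A 0 2 - A 0 1, ?_, ?_, ?_, ?_, ?_, ?_, ?_, ?_, ?_⟩
    · rw [F, hinv, Fgen]
      ext i j
      fin_cases i <;> fin_cases j <;> simp [Matrix.vecHead, Matrix.vecTail] <;> linarith
    · linarith [hp 0 0, hp 0 3]
    · linarith [hp 0 1, hp 0 2]
    · linarith [hp 1 1, hp 1 2]
    · linarith [hp 1 0, hp 1 3]
    · exact abs_lt.mpr ⟨by linarith [hp 0 0, hp 0 3], by linarith [hp 0 0, hp 0 3]⟩
    · exact abs_lt.mpr ⟨by linarith [hp 0 1, hp 0 2], by linarith [hp 0 1, hp 0 2]⟩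
    · exact abs_lt.mpr ⟨by linarith [hp 1 1, hp 1 2], by linarith [hp 1 1, hp 1 2]⟩
    · exact abs_lt.mpr ⟨by linarith [hp 1 0, hp 1 3], by linarith [hp 1 0, hp 1 3]⟩
  · rintro ⟨lam, mu, al, al', be, be', hF, hl0, hl1, hm0, hm1, hbe, hbe', hal, hal'⟩
    obtain ⟨hbe1, hbe2⟩ := abs_lt.mp hbe
    obtain ⟨hbe'1, hbe'2⟩ := abs_lt.mp hbe'
    obtain ⟨hal1, hal2⟩ := abs_lt.mp hal
    obtain ⟨hal'1, hal'2⟩ := abs_lt.mp hal'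
    rw [F, hinv] at hF
    have hA : A =
        !![(lam+be)/2, (1-lam-be')/2, (1-lam+be')/2, (lam-be)/2;
           (1-mu-al')/2, (mu+al)/2, (mu-al)/2, (1-mu+al')/2;
           (1-mu+al')/2, (mu-al)/2, (mu+al)/2, (1-mu-al')/2;
           (lam-be)/2, (1-lam+be')/2, (1-lam-be')/2, (lam+be)/2] := by
      rw [← recon]
      calc A = Smat * SmatInv * A * (Smat * SmatInv) := by rw [hSB]; simp
        _ = Smat * (SmatInv * A * Smat) * SmatInv := by simp only [Matrix.mul_assoc]
        _ = _ := by rw [hF]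
    have hrow : ∀ i, ∑ j, A i j = 1 := by
      intro i
      rw [hA]
      fin_cases i <;> simp [Fin.sum_univ_four] <;> ring
    refine ⟨⟨?_, hrow⟩, hrow, ?_, ?_, ?_, ?_, ?_, ?_, ?_, ?_⟩
    · intro i j
      rw [hA]
      fin_cases i <;> fin_cases j <;> simp [Matrix.vecHead, Matrix.vecTail] <;> linarith
    all_goals rw [hA]
    all_goals simp
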